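/- Define in p-representation α̌^k = Σ_r (∂V^r/∂p_k) Ǔ_r + Σ_r (∇_r W^k) V^r + Σ_r (∂W^k/∂p_r) Q_r + Σ_r W^r (∂Q_r/∂p_k) − Σ_{r,s,q} p_s Ď^{sk}_{rq} W^r V^q. Then for every point (x,v) and all k: α̌^k(x, L(x,v)) = α^k(x,v), where α^k is the v-representation expression given in the context. -/

import Mathlib

/- Coordinate formalization of extended tensor fields in v- and p-representation
   for a generalized Legendre transformation λ(x,v) = (x, L(x,v)). -/

noncomputable section

open scoped BigOperators

/-- A point of the (co)tangent bundle in a single chart: a pair (x, v) or (x, p). -/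
abbrev Pt (n : ℕ) := (Fin n → ℝ) × (Fin n → ℝ)

/-- An indexed family of scalar functions (components of a (co)vector field). -/
abbrev Fam (n : ℕ) := Fin n → Pt n → ℝ

/-- Components Γ^k_{ij} of an extended connection (or of a gauge tensor T^k_{ij}). -/
abbrev Conn (n : ℕ) := Fin n → Fin n → Fin n → Pt n → ℝ

variable {n : ℕ}

/-- Kronecker delta δ^i_j. -/
def kron (i j : Fin n) : ℝ := if i = j then 1 else 0

/-- Partial derivative ∂f/∂x^m (first slot). -/
def pdx (m : Fin n) (f : Pt n → ℝ) (q : Pt n) : ℝ :=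
  fderiv ℝ f q (Pi.single m 1, 0)

/-- Partial derivative ∂f/∂v^m (resp. ∂f/∂p_m): second slot. -/
def pdv (m : Fin n) (f : Pt n → ℝ) (q : Pt n) : ℝ :=
  fderiv ℝ f q (0, Pi.single m 1)

/-- The generalized Legendre transformation λ(x,v) = (x, L(x,v)). -/
def lam (L : Fam n) (q : Pt n) : Pt n := (q.1, fun i => L i q)

/-- The inverse map λ⁻¹(x,p) = (x, V(x,p)). -/
def lamInv (V : Fam n) (q : Pt n) : Pt n := (q.1, fun i => V i q)

/-- g_{rk} = ∂L_r/∂v^k. -/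
def gdn (L : Fam n) (r k : Fin n) (q : Pt n) : ℝ := pdv k (L r) q

/-- L^i = Σ_q L_q g^{qi}. -/
def Lup (L : Fam n) (ginv : Fin n → Fin n → Pt n → ℝ) (i : Fin n) (q : Pt n) : ℝ :=
  ∑ j, L j q * ginv j i q

/-- |L|² = Σ_s L_s L^s. -/
def L2 (L : Fam n) (ginv : Fin n → Fin n → Pt n → ℝ) (q : Pt n) : ℝ :=
  ∑ s, L s q * Lup L ginv s q

/-- p-representation: W^i = Σ_s p_s ∂V^s/∂p_i. -/
def Wp (V : Fam n) (i : Fin n) (q : Pt n) : ℝ :=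
  ∑ s, q.2 s * pdv i (V s) q

/-- p-representation: Ω = Σ_s p_s W^s. -/
def Omga (V : Fam n) (q : Pt n) : ℝ := ∑ s, q.2 s * Wp V s q

/-- p-representation projector P̌^i_j = δ^i_j − W^i p_j / Ω. -/
def Pp (V : Fam n) (i j : Fin n) (q : Pt n) : ℝ :=
  kron i j - Wp V i q * q.2 j / Omga V q

/-- v-representation projector P^i_j = δ^i_j − L^i L_j / |L|². -/
def Pv (L : Fam n) (ginv : Fin n → Fin n → Pt n → ℝ) (i j : Fin n) (q : Pt n) : ℝ :=
  kron i j - Lup L ginv i q * L j q / L2 L ginv q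

/-- Scalar part of the v-representation horizontal covariant derivative:
    ∂f/∂x^m − Σ_{a,b} v^a Γ^b_{am} ∂f/∂v^b. -/
def vS (Γ : Conn n) (m : Fin n) (f : Pt n → ℝ) (q : Pt n) : ℝ :=
  pdx m f q - ∑ a, ∑ b, q.2 a * Γ b a m q * pdv b f q

/-- v-representation ∇_m X_j of a covector field. -/
def vCov (Γ : Conn n) (m : Fin n) (X : Fam n) (j : Fin n) (q : Pt n) : ℝ :=
  vS Γ m (X j) q - ∑ b, Γ b m j q * X b q

/-- v-representation ∇_m X^i of a vector field. -/
def vVec (Γ : Conn n) (m : Fin n) (X : Fam n) (i : Fin n) (q : Pt n) : ℝ :=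
  vS Γ m (X i) q + ∑ a, Γ i m a q * X a q

/-- v-representation ∇_k Y_{m r} of a (0,2) tensor field. -/
def vCov2 (Γ : Conn n) (k : Fin n) (Y : Fin n → Fin n → Pt n → ℝ)
    (m r : Fin n) (q : Pt n) : ℝ :=
  vS Γ k (Y m r) q - (∑ b, Γ b k m q * Y b r q) - (∑ b, Γ b k r q * Y m b q)

/-- v-representation ∇_m T^k_{ij} of a (1,2) tensor field. -/
def vT12 (Γ : Conn n) (m : Fin n) (T : Conn n) (k i j : Fin n) (q : Pt n) : ℝ :=
  vS Γ m (T k i j) q + (∑ a, Γ k m a q * T a i j q)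
    - (∑ b, Γ b m i q * T k b j q) - (∑ b, Γ b m j q * T k i b q)

/-- Connection components in p-representation: Γ^k_{ij} ∘ λ⁻¹. -/
def Gp (Γ : Conn n) (V : Fam n) (k i j : Fin n) (q : Pt n) : ℝ :=
  Γ k i j (lamInv V q)

/-- Scalar part of the p-representation horizontal covariant derivative:
    ∂f/∂x^m + Σ_{a,b} p_a Γ^a_{mb} ∂f/∂p_b. -/
def pS (G : Conn n) (m : Fin n) (f : Pt n → ℝ) (q : Pt n) : ℝ :=
  pdx m f q + ∑ a, ∑ b, q.2 a * G a m b q * pdv b f q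

/-- p-representation ∇_m X_j of a covector field. -/
def pCov (G : Conn n) (m : Fin n) (X : Fam n) (j : Fin n) (q : Pt n) : ℝ :=
  pS G m (X j) q - ∑ b, G b m j q * X b q

/-- p-representation ∇_m X^i of a vector field. -/
def pVec (G : Conn n) (m : Fin n) (X : Fam n) (i : Fin n) (q : Pt n) : ℝ :=
  pS G m (X i) q + ∑ a, G i m a q * X a q

/-- Force vector F^i = Φ^i + Σ_{j,k} Γ^i_{jk} v^j v^k. -/
def Fvec (Γ : Conn n) (Φ : Fam n) (i : Fin n) (q : Pt n) : ℝ :=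
  Φ i q + ∑ j, ∑ k, Γ i j k q * q.2 j * q.2 k

/-- Force covector F_q = Σ_i g_{qi} F^i. -/
def Fcov (L : Fam n) (Γ : Conn n) (Φ : Fam n) (i : Fin n) (q : Pt n) : ℝ :=
  ∑ j, gdn L i j q * Fvec Γ Φ j q

/-- p-representation force covector Q_i = Θ_i − Σ_{j,k} Γ^k_{ij} V^j p_k. -/
def Qp (Θ : Fam n) (Γ : Conn n) (V : Fam n) (i : Fin n) (q : Pt n) : ℝ :=
  Θ i q - ∑ j, ∑ k, Gp Γ V k i j q * V j q * q.2 k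

/-- p-representation covector Ǔ_i = Q_i + Σ_s (∇_i V^s) p_s. -/
def Ucheck (Θ : Fam n) (Γ : Conn n) (V : Fam n) (i : Fin n) (q : Pt n) : ℝ :=
  Qp Θ Γ V i q + ∑ s, pVec (Gp Γ V) i V s q * q.2 s

/-- v-representation covector U_i = Σ_q v^q ∇_q L_i − Σ_q L^q ∇_i L_q + F_i. -/
def Uv (L : Fam n) (ginv : Fin n → Fin n → Pt n → ℝ) (Γ : Conn n) (Φ : Fam n)
    (i : Fin n) (q : Pt n) : ℝ :=
  (∑ j, q.2 j * vCov Γ j L i q) - (∑ j, Lup L ginv j q * vCov Γ i L j q) + Fcov L Γ Φ i q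

/-- v-representation dynamic curvature tensor D^k_{rij} = −∂Γ^k_{ir}/∂v^j. -/
def Dv (Γ : Conn n) (k r i j : Fin n) (q : Pt n) : ℝ := -(pdv j (Γ k i r) q)

/-- v-representation curvature tensor R^k_{rij}. -/
def Rv (Γ : Conn n) (k r i j : Fin n) (q : Pt n) : ℝ :=
  pdx i (Γ k j r) q - pdx j (Γ k i r) q
  + (∑ m, (Γ k i m q * Γ m j r q - Γ k j m q * Γ m i r q))
  - (∑ m, ∑ s, q.2 s * Γ m i s q * pdv m (Γ k j r) q)
  + (∑ m, ∑ s, q.2 s * Γ m j s q * pdv m (Γ k i r) q)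

/-- p-representation dynamic curvature tensor Ď^{kr}_{ij} = −∂Γ^k_{ij}/∂p_r. -/
def Dp (G : Conn n) (k r i j : Fin n) (q : Pt n) : ℝ := -(pdv r (G k i j) q)

/-- p-representation curvature tensor Ř^k_{rij}. -/
def Rp (G : Conn n) (k r i j : Fin n) (q : Pt n) : ℝ :=
  pdx i (G k j r) q - pdx j (G k i r) q
  + (∑ m, (G k i m q * G m j r q - G k j m q * G m i r q))
  + (∑ m, ∑ s, q.2 s * G s m i q * pdv m (G k j r) q)
  - (∑ m, ∑ s, q.2 s * G s m j q * pdv m (G k i r) q)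

/-- p-representation vector field α̌^k. -/
def alphaCheck (Θ : Fam n) (Γ : Conn n) (V : Fam n) (k : Fin n) (q : Pt n) : ℝ :=
  (∑ r, pdv k (V r) q * Ucheck Θ Γ V r q)
  + (∑ r, pVec (Gp Γ V) r (Wp V) k q * V r q)
  + (∑ r, pdv r (Wp V k) q * Qp Θ Γ V r q)
  + (∑ r, Wp V r q * pdv k (Qp Θ Γ V r) q)
  - (∑ r, ∑ s, ∑ j, q.2 s * Dp (Gp Γ V) s k r j q * Wp V r q * V j q)

/-- v-representation vector field α^k. -/
def alphaV (L : Fam n) (ginv : Fin n → Fin n → Pt n → ℝ) (Γ : Conn n) (Φ : Fam n)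
    (k : Fin n) (q : Pt n) : ℝ :=
  (∑ r, ginv r k q * Uv L ginv Γ Φ r q)
  + (∑ r, q.2 r * vVec Γ r (Lup L ginv) k q)
  + (∑ j, Fvec Γ Φ j q * pdv j (Lup L ginv k) q)
  + (∑ j, ∑ r, ∑ s, Lup L ginv r q * ginv j k q * q.2 s * pdv j (vCov Γ s L r) q)
  + (∑ j, ∑ r, Lup L ginv r q * ginv j k q * pdv j (Fcov L Γ Φ r) q)
  + (∑ j, ∑ r, Lup L ginv r q * ginv j k q * vCov Γ j L r q)
  - (∑ j, ∑ m, ∑ r, ∑ s, ginv m k q * L s q * Dv Γ s r j m q * Lup L ginv r q * q.2 j)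

/-- p-representation covector field β̌_k. -/
def betaCheck (Θ : Fam n) (Γ : Conn n) (V : Fam n) (k : Fin n) (q : Pt n) : ℝ :=
  (∑ r, pCov (Gp Γ V) r (Ucheck Θ Γ V) k q * V r q)
  + (∑ r, pdv r (Ucheck Θ Γ V k) q * Qp Θ Γ V r q)
  + (∑ r, pVec (Gp Γ V) k V r q * Ucheck Θ Γ V r q)
  + (∑ r, pCov (Gp Γ V) k (Qp Θ Γ V) r q * Wp V r q)
  - (∑ r, ∑ s, ∑ m, (Rp (Gp Γ V) s r m k q * V m q
      - Dp (Gp Γ V) s m r k q * Qp Θ Γ V m q) * Wp V r q * q.2 s)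

/-- v-representation covector field β_k. -/
def betaV (L : Fam n) (ginv : Fin n → Fin n → Pt n → ℝ) (Γ : Conn n) (Φ : Fam n)
    (k : Fin n) (q : Pt n) : ℝ :=
  (∑ r, q.2 r * vCov Γ r (Uv L ginv Γ Φ) k q)
  + (∑ j, Fvec Γ Φ j q * pdv j (Uv L ginv Γ Φ k) q)
  - (∑ j, ∑ r, ∑ s, vCov Γ k L j q * ginv r j q * q.2 s * vCov Γ s L r q)
  - (∑ j, ∑ r, vCov Γ k L j q * ginv r j q * Fcov L Γ Φ r q)
  + (∑ r, Lup L ginv r q * vCov Γ k (Fcov L Γ Φ) r q)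
  + (∑ m, ∑ r, Lup L ginv r q * q.2 m * vCov2 Γ k (fun m' r' => vCov Γ m' L r') m r q)
  - (∑ j, ∑ r, ∑ s, Lup L ginv r q * vCov Γ k L j q * ginv s j q * pdv s (Fcov L Γ Φ r) q)
  - (∑ j, ∑ m, ∑ r, ∑ s, Lup L ginv r q * vCov Γ k L j q * ginv s j q * q.2 m
      * pdv s (vCov Γ m L r) q)
  - (∑ r, ∑ s, ∑ m, Rv Γ s r m k q * q.2 m * Lup L ginv r q * L s q)
  + (∑ j, ∑ r, ∑ s, ∑ m, ∑ a, ginv a j q * vCov Γ k L j q * Dv Γ s m r a q * q.2 m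
      * Lup L ginv r q * L s q)
  + (∑ r, ∑ s, ∑ m, ∑ a, ginv a m q * Dv Γ s r k a q * Fcov L Γ Φ m q
      * Lup L ginv r q * L s q)

/-- v-representation covector field η_k = β_k − Σ_s U_k α^s L_s / |L|². -/
def etaV (L : Fam n) (ginv : Fin n → Fin n → Pt n → ℝ) (Γ : Conn n) (Φ : Fam n)
    (k : Fin n) (q : Pt n) : ℝ :=
  betaV L ginv Γ Φ k q
    - ∑ s, Uv L ginv Γ Φ k q * alphaV L ginv Γ Φ s q * L s q / L2 L ginv q

/-- p-representation tensor Ǎ^{rs} = ∂W^s/∂p_r. -/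
def Acheck (V : Fam n) (r s : Fin n) (q : Pt n) : ℝ := pdv r (Wp V s) q

/-- v-representation tensor A^{rs} = Σ_q g^{qr} ∂L^s/∂v^q. -/
def Av (L : Fam n) (ginv : Fin n → Fin n → Pt n → ℝ) (r s : Fin n) (q : Pt n) : ℝ :=
  ∑ j, ginv j r q * pdv j (Lup L ginv s) q

/-- p-representation tensor B̌^r_s. -/
def Bcheck (Θ : Fam n) (Γ : Conn n) (V : Fam n) (r s : Fin n) (q : Pt n) : ℝ :=
  pdv r (Ucheck Θ Γ V s) q
  + (∑ m, ∑ k, Wp V k q * q.2 m * Dp (Gp Γ V) m r k s q)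
  - pVec (Gp Γ V) s (Wp V) r q
  + (∑ m, (pdv m (Wp V r) q - pdv r (Wp V m) q) * Ucheck Θ Γ V s q * q.2 m / Omga V q)

/-- v-representation tensor B^r_s. -/
def Bv (L : Fam n) (ginv : Fin n → Fin n → Pt n → ℝ) (Γ : Conn n) (Φ : Fam n)
    (r s : Fin n) (q : Pt n) : ℝ :=
  (∑ j, ginv j r q * pdv j (Uv L ginv Γ Φ s) q)
  + (∑ m, ∑ k, ∑ j, ginv j r q * Lup L ginv k q * L m q * Dv Γ m k s j q)
  - vVec Γ s (Lup L ginv) r q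
  + (∑ j, ∑ k, vCov Γ s L k q * ginv j k q * pdv j (Lup L ginv r) q)
  + (∑ j, ∑ m, (ginv j m q * pdv j (Lup L ginv r) q - ginv j r q * pdv j (Lup L ginv m) q)
      * Uv L ginv Γ Φ s q * L m q / L2 L ginv q)

/-- p-representation tensor Č_{rs}. -/
def Ccheck (Θ : Fam n) (Γ : Conn n) (V : Fam n) (r s : Fin n) (q : Pt n) : ℝ :=
  pCov (Gp Γ V) r (Ucheck Θ Γ V) s q
  - (∑ m, (Ucheck Θ Γ V r q * pdv m (Ucheck Θ Γ V s) q
      + Ucheck Θ Γ V s q * pVec (Gp Γ V) r (Wp V) m q) * q.2 m / Omga V q)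
  - (∑ k, ∑ j, ((∑ m, Dp (Gp Γ V) m j k s q * Ucheck Θ Γ V r q * q.2 m / Omga V q)
      + Rp (Gp Γ V) j k r s q / 2) * Wp V k q * q.2 j)

/-- v-representation tensor C_{rs}. -/
def Cv (L : Fam n) (ginv : Fin n → Fin n → Pt n → ℝ) (Γ : Conn n) (Φ : Fam n)
    (r s : Fin n) (q : Pt n) : ℝ :=
  vCov Γ r (Uv L ginv Γ Φ) s q
  - (∑ j, ∑ k, vCov Γ r L j q * ginv k j q * pdv k (Uv L ginv Γ Φ s) q)
  - (∑ m, Uv L ginv Γ Φ s q * vVec Γ r (Lup L ginv) m q * L m q / L2 L ginv q)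
  - (∑ j, ∑ m, Uv L ginv Γ Φ r q * ginv j m q * pdv j (Uv L ginv Γ Φ s) q * L m q
      / L2 L ginv q)
  + (∑ m, ∑ j, ∑ k, Uv L ginv Γ Φ s q * vCov Γ r L k q * ginv j k q
      * pdv j (Lup L ginv m) q * L m q / L2 L ginv q)
  - (∑ k, ∑ j, ∑ m, ∑ a, ginv a j q * Dv Γ m k s a q * Uv L ginv Γ Φ r q * L m q
      * Lup L ginv k q * L j q / L2 L ginv q)
  - (∑ k, ∑ j, (Rv Γ j k r s q / 2) * Lup L ginv k q * L j q)
  - (∑ k, ∑ j, ∑ m, ∑ a, vCov Γ r L m q * Dv Γ j k s a q * ginv a m q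
      * Lup L ginv k q * L j q)

/-- Gauge-transformed connection Γ' = Γ + T. -/
def addT (Γ T : Conn n) : Conn n := fun k i j q => Γ k i j q + T k i j q

/-- The quantity Ξ_{rs} appearing in the gauge transformation rule for C. -/
def XiG (L : Fam n) (ginv : Fin n → Fin n → Pt n → ℝ) (Γ : Conn n) (Φ : Fam n)
    (T : Conn n) (r s : Fin n) (q : Pt n) : ℝ :=
  (∑ j, ∑ b, ∑ m, T b r j q * L b q * Pv L ginv j m q * Bv L ginv Γ Φ m s q)
  + (∑ j, ∑ b, ∑ m, ∑ a, ∑ c, ∑ e, T b r j q * L b q * Pv L ginv j m q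
      * Av L ginv m a q * Pv L ginv c a q * T e s c q * L e q)

end


noncomputable section Aux
open scoped BigOperators
variable {n : ℕ}

-- generic pair map
def pair (Y : Fam n) (q : Pt n) : Pt n := (q.1, fun i => Y i q)

lemma contDiff_pair {Y : Fam n} (hY : ∀ i, ContDiff ℝ (⊤:ℕ∞) (Y i)) :
    ContDiff ℝ (⊤:ℕ∞) (pair Y) :=
  contDiff_fst.prodMk (contDiff_pi.2 hY)

lemma hasFDerivAt_pair {Y : Fam n} (hY : ∀ i, ContDiff ℝ (⊤:ℕ∞) (Y i)) (q : Pt n) :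
    HasFDerivAt (pair Y)
      ((ContinuousLinearMap.fst ℝ (Fin n → ℝ) (Fin n → ℝ)).prod
        (ContinuousLinearMap.pi (fun i => fderiv ℝ (Y i) q))) q := by
  exact (hasFDerivAt_fst).prodMk (hasFDerivAt_pi.2 fun i =>
    ((hY i).differentiable (by simp) q).hasFDerivAt)

-- chain rule through pair, general direction
lemma fderiv_comp_pair {Y : Fam n} (hY : ∀ i, ContDiff ℝ (⊤:ℕ∞) (Y i))
    {f : Pt n → ℝ} (q : Pt n) (hf : DifferentiableAt ℝ f (pair Y q)) (w : Pt n) :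
    fderiv ℝ (fun p => f (pair Y p)) q w
      = fderiv ℝ f (pair Y q) (w.1, fun i => fderiv ℝ (Y i) q w) := by
  have h := (hf.hasFDerivAt.comp q (hasFDerivAt_pair hY q)).fderiv
  have : fderiv ℝ (fun p => f (pair Y p)) q = fderiv ℝ (f ∘ pair Y) q := rfl
  rw [this, h]; rfl

-- decomposition of a CLM applied to (a, u)
lemma clm_apply_decomp (ℓ : Pt n →L[ℝ] ℝ) (a u : Fin n → ℝ) :
    ℓ (a, u) = ℓ (a, 0) + ∑ b, u b * ℓ (0, Pi.single b 1) := by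
  have hu : (a, u) = (a, (0:Fin n → ℝ)) + ∑ b, u b • (((0:Fin n → ℝ), Pi.single b 1) : Pt n) := by
    rw [Prod.ext_iff]
    constructor
    · simp [Prod.fst_sum]
    · funext i
      simp [Prod.snd_sum, Finset.sum_apply, Pi.single_apply]
  rw [hu, map_add, map_sum]
  congr 1
  refine Finset.sum_congr rfl fun b _ => ?_
  rw [map_smul, smul_eq_mul]

lemma pdv_comp_pair {Y : Fam n} (hY : ∀ i, ContDiff ℝ (⊤:ℕ∞) (Y i))
    {f : Pt n → ℝ} (q : Pt n) (hf : DifferentiableAt ℝ f (pair Y q)) (m : Fin n) :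
    pdv m (fun p => f (pair Y p)) q
      = ∑ b, pdv b f (pair Y q) * pdv m (Y b) q := by
  unfold pdv
  rw [fderiv_comp_pair hY q hf]
  have := clm_apply_decomp (fderiv ℝ f (pair Y q)) (((0:Fin n → ℝ), Pi.single m 1) : Pt n).1
    (fun i => fderiv ℝ (Y i) q ((0:Fin n → ℝ), Pi.single m 1))
  simp only at this
  rw [this]
  have hz : (fderiv ℝ f (pair Y q)) ((0:Fin n → ℝ), (0:Fin n → ℝ)) = 0 := by
    have : (((0:Fin n → ℝ), (0:Fin n → ℝ)) : Pt n) = 0 := rfl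
    rw [this, map_zero]
  rw [hz, zero_add]
  exact Finset.sum_congr rfl fun b _ => mul_comm _ _

lemma pdx_comp_pair {Y : Fam n} (hY : ∀ i, ContDiff ℝ (⊤:ℕ∞) (Y i))
    {f : Pt n → ℝ} (q : Pt n) (hf : DifferentiableAt ℝ f (pair Y q)) (m : Fin n) :
    pdx m (fun p => f (pair Y p)) q
      = pdx m f (pair Y q) + ∑ b, pdx m (Y b) q * pdv b f (pair Y q) := by
  unfold pdx
  rw [fderiv_comp_pair hY q hf]
  have := clm_apply_decomp (fderiv ℝ f (pair Y q)) (Pi.single m 1)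
    (fun i => fderiv ℝ (Y i) q ((Pi.single m 1 : Fin n → ℝ), (0:Fin n → ℝ)))
  rw [this]
  rfl

section rules
variable {f g : Pt n → ℝ} {q w : Pt n}

lemma fd_add (hf : DifferentiableAt ℝ f q) (hg : DifferentiableAt ℝ g q) :
    fderiv ℝ (fun p => f p + g p) q w = fderiv ℝ f q w + fderiv ℝ g q w := by
  rw [fderiv_fun_add hf hg]; rfl

lemma fd_sub (hf : DifferentiableAt ℝ f q) (hg : DifferentiableAt ℝ g q) :
    fderiv ℝ (fun p => f p - g p) q w = fderiv ℝ f q w - fderiv ℝ g q w := by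
  rw [fderiv_fun_sub hf hg]; rfl

lemma fd_mul (hf : DifferentiableAt ℝ f q) (hg : DifferentiableAt ℝ g q) :
    fderiv ℝ (fun p => f p * g p) q w = fderiv ℝ f q w * g q + f q * fderiv ℝ g q w := by
  rw [fderiv_fun_mul hf hg]
  simp [smul_eq_mul]
  ring

lemma fd_const (c : ℝ) : fderiv ℝ (fun _ : Pt n => c) q w = 0 := by
  rw [fderiv_const_apply]; rfl

lemma fd_sum {ι : Type*} (s : Finset ι) (F : ι → Pt n → ℝ)
    (hF : ∀ i ∈ s, DifferentiableAt ℝ (F i) q) :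
    fderiv ℝ (fun p => ∑ i ∈ s, F i p) q w = ∑ i ∈ s, fderiv ℝ (F i) q w := by
  rw [fderiv_fun_sum hF]; exact ContinuousLinearMap.sum_apply _ _ _

lemma fd_neg (hf : DifferentiableAt ℝ f q) :
    fderiv ℝ (fun p => -(f p)) q w = -(fderiv ℝ f q w) := by
  rw [fderiv_fun_neg]; rfl

lemma fd_coord2 (s : Fin n) : fderiv ℝ (fun p : Pt n => p.2 s) q w = w.2 s := by
  have : (fun p : Pt n => p.2 s)
      = ((ContinuousLinearMap.proj s : (Fin n → ℝ) →L[ℝ] ℝ).comp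
          (ContinuousLinearMap.snd ℝ (Fin n → ℝ) (Fin n → ℝ))) := rfl
  rw [this, ContinuousLinearMap.fderiv]; rfl

lemma fd_coord1 (s : Fin n) : fderiv ℝ (fun p : Pt n => p.1 s) q w = w.1 s := by
  have : (fun p : Pt n => p.1 s)
      = ((ContinuousLinearMap.proj s : (Fin n → ℝ) →L[ℝ] ℝ).comp
          (ContinuousLinearMap.fst ℝ (Fin n → ℝ) (Fin n → ℝ))) := rfl
  rw [this, ContinuousLinearMap.fderiv]; rfl

end rules

lemma pdv_coord2 (m s : Fin n) (q : Pt n) : pdv m (fun p : Pt n => p.2 s) q = kron s m := by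
  unfold pdv; rw [fd_coord2]; simp [kron, Pi.single_apply]

lemma pdx_coord2 (m s : Fin n) (q : Pt n) : pdx m (fun p : Pt n => p.2 s) q = 0 := by
  unfold pdx; rw [fd_coord2]; rfl

-- smoothness of pdv / pdx
lemma contDiff_fd (w : Pt n) {f : Pt n → ℝ} (hf : ContDiff ℝ (⊤:ℕ∞) f) :
    ContDiff ℝ (⊤:ℕ∞) (fun q => fderiv ℝ f q w) := by
  have h1 : ContDiff ℝ (⊤:ℕ∞) (fderiv ℝ f) := (contDiff_infty_iff_fderiv.mp hf).2
  exact (ContinuousLinearMap.apply ℝ ℝ w).contDiff.comp h1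

lemma contDiff_pdv (m : Fin n) {f : Pt n → ℝ} (hf : ContDiff ℝ (⊤:ℕ∞) f) :
    ContDiff ℝ (⊤:ℕ∞) (pdv m f) := contDiff_fd _ hf

lemma contDiff_pdx (m : Fin n) {f : Pt n → ℝ} (hf : ContDiff ℝ (⊤:ℕ∞) f) :
    ContDiff ℝ (⊤:ℕ∞) (pdx m f) := contDiff_fd _ hf

lemma contDiff_coord2 (s : Fin n) : ContDiff ℝ (⊤:ℕ∞) (fun p : Pt n => p.2 s) :=
  (contDiff_apply ℝ ℝ s).comp contDiff_snd

lemma CD.diff {f : Pt n → ℝ} (hf : ContDiff ℝ (⊤:ℕ∞) f) (q : Pt n) :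
    DifferentiableAt ℝ f q := (hf.differentiable (by simp)) q

lemma sum_kron (A : Fin n → ℝ) (b : Fin n) : (∑ m, A m * kron m b) = A b := by
  simp [kron, mul_ite, Finset.sum_ite_eq]

lemma sum_kron' (A : Fin n → ℝ) (b : Fin n) : (∑ m, kron b m * A m) = A b := by
  simp [kron, ite_mul, Finset.sum_ite_eq']

section Dict
variable {L V : Fam n} {ginv : Fin n → Fin n → Pt n → ℝ}

lemma ginv_right (hginv : ∀ (q : Pt n) (s k : Fin n), (∑ r, ginv s r q * gdn L r k q) = kron s k)
    (q : Pt n) (s k : Fin n) : (∑ r, gdn L s r q * ginv r k q) = kron s k := by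
  have hAB : (Matrix.of fun s r => ginv s r q) * (Matrix.of fun r k => gdn L r k q) = 1 := by
    ext i j
    simp only [Matrix.mul_apply, Matrix.of_apply, Matrix.one_apply]
    rw [hginv q i j]; simp [kron]
  have hBA := mul_eq_one_comm.mp hAB
  have := congrFun (congrFun hBA s) k
  simp only [Matrix.mul_apply, Matrix.of_apply, Matrix.one_apply] at this
  rw [this]; simp [kron]

lemma solve_right (hginv : ∀ (q : Pt n) (s k : Fin n), (∑ r, ginv s r q * gdn L r k q) = kron s k)
    (q : Pt n) (M A : Fin n → ℝ) (h : ∀ m, (∑ b, M b * gdn L b m q) = A m) (c : Fin n) :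
    M c = ∑ m, A m * ginv m c q := by
  have : M c = ∑ b, M b * kron b c := by rw [← sum_kron (fun b => M b) c]
  rw [this]
  calc (∑ b, M b * kron b c) = ∑ b, M b * ∑ r, gdn L b r q * ginv r c q := by
        refine Finset.sum_congr rfl fun b _ => ?_; rw [ginv_right hginv]
    _ = ∑ b, ∑ r, M b * gdn L b r q * ginv r c q := by
        refine Finset.sum_congr rfl fun b _ => ?_; rw [Finset.mul_sum]; ring_nf
    _ = ∑ r, (∑ b, M b * gdn L b r q) * ginv r c q := by
        rw [Finset.sum_comm]
        refine Finset.sum_congr rfl fun r _ => ?_; rw [Finset.sum_mul]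
    _ = ∑ m, A m * ginv m c q := by
        refine Finset.sum_congr rfl fun m _ => ?_; rw [h m]

lemma V_lam (hLeft : ∀ q : Pt n, lamInv V (lam L q) = q) (q : Pt n) (s : Fin n) :
    V s (lam L q) = q.2 s :=
  congrFun (congrArg Prod.snd (hLeft q)) s

lemma lam_eq_pair : lam L = pair L := rfl

lemma pdv_comp_lam (hL : ∀ i, ContDiff ℝ (⊤:ℕ∞) (L i)) {f : Pt n → ℝ} (q : Pt n)
    (hf : DifferentiableAt ℝ f (lam L q)) (m : Fin n) :
    pdv m (fun p => f (lam L p)) q = ∑ b, pdv b f (lam L q) * gdn L b m q :=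
  pdv_comp_pair hL q hf m

lemma pdx_comp_lam (hL : ∀ i, ContDiff ℝ (⊤:ℕ∞) (L i)) {f : Pt n → ℝ} (q : Pt n)
    (hf : DifferentiableAt ℝ f (lam L q)) (m : Fin n) :
    pdx m (fun p => f (lam L p)) q = pdx m f (lam L q) + ∑ b, pdx m (L b) q * pdv b f (lam L q) :=
  pdx_comp_pair hL q hf m

variable (hL : ∀ i, ContDiff ℝ (⊤:ℕ∞) (L i)) (hV : ∀ i, ContDiff ℝ (⊤:ℕ∞) (V i))
variable (hLeft : ∀ q : Pt n, lamInv V (lam L q) = q)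
variable (hginv : ∀ (q : Pt n) (s k : Fin n), (∑ r, ginv s r q * gdn L r k q) = kron s k)

include hL hV hLeft hginv in
lemma pdvV (q : Pt n) (s b : Fin n) : pdv b (V s) (lam L q) = ginv s b q := by
  have hcomp : (fun p => V s (lam L p)) = fun p : Pt n => p.2 s := funext fun p => V_lam hLeft p s
  have hch : ∀ m, (∑ c, pdv c (V s) (lam L q) * gdn L c m q) = kron s m := by
    intro m
    rw [← pdv_comp_lam hL q (CD.diff (hV s) _) m, hcomp, pdv_coord2]
  have := solve_right hginv q (fun c => pdv c (V s) (lam L q)) (fun m => kron s m) hch b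
  rw [this, sum_kron']

include hL hV hLeft hginv in
lemma pdxV (q : Pt n) (s m : Fin n) :
    pdx m (V s) (lam L q) = -∑ c, ginv s c q * pdx m (L c) q := by
  have hcomp : (fun p => V s (lam L p)) = fun p : Pt n => p.2 s := funext fun p => V_lam hLeft p s
  have h0 : pdx m (fun p => V s (lam L p)) q = 0 := by rw [hcomp, pdx_coord2]
  rw [pdx_comp_lam hL q (CD.diff (hV s) _) m] at h0
  have : (∑ b, pdx m (L b) q * pdv b (V s) (lam L q)) = ∑ c, ginv s c q * pdx m (L c) q := by
    refine Finset.sum_congr rfl fun b _ => ?_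
    rw [pdvV hL hV hLeft hginv]; ring
  rw [this] at h0
  linarith

-- inverse chain: value of p-rep derivatives at lam L q from the pullback h
include hL hginv in
lemma pdv_at_lam {f h : Pt n → ℝ} (q : Pt n) (hf : DifferentiableAt ℝ f (lam L q))
    (hcomp : ∀ p, f (lam L p) = h p) (c : Fin n) :
    pdv c f (lam L q) = ∑ m, pdv m h q * ginv m c q := by
  refine solve_right hginv q (fun b => pdv b f (lam L q)) (fun m => pdv m h q) (fun m => ?_) c
  rw [← pdv_comp_lam hL q hf m]
  congr 1
  exact funext hcomp

include hL hginv in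
lemma pdx_at_lam {f h : Pt n → ℝ} (q : Pt n) (hf : DifferentiableAt ℝ f (lam L q))
    (hcomp : ∀ p, f (lam L p) = h p) (m : Fin n) :
    pdx m f (lam L q)
      = pdx m h q - ∑ b, pdx m (L b) q * ∑ j, pdv j h q * ginv j b q := by
  have h0 : pdx m (fun p => f (lam L p)) q = pdx m h q := by
    congr 1; exact funext hcomp
  rw [pdx_comp_lam hL q hf m] at h0
  have : (∑ b, pdx m (L b) q * pdv b f (lam L q))
      = ∑ b, pdx m (L b) q * ∑ j, pdv j h q * ginv j b q := by
    refine Finset.sum_congr rfl fun b _ => ?_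
    rw [pdv_at_lam hL hginv q hf hcomp b]
  rw [this] at h0
  linarith

end Dict

section Smooth
variable {L V Φ Θ : Fam n} {ginv : Fin n → Fin n → Pt n → ℝ} {Γ : Conn n}
variable (hL : ∀ i, ContDiff ℝ (⊤:ℕ∞) (L i)) (hV : ∀ i, ContDiff ℝ (⊤:ℕ∞) (V i))
variable (hginvSm : ∀ i j, ContDiff ℝ (⊤:ℕ∞) (ginv i j))
variable (hΓ : ∀ k i j, ContDiff ℝ (⊤:ℕ∞) (Γ k i j))
variable (hΦ : ∀ i, ContDiff ℝ (⊤:ℕ∞) (Φ i)) (hΘ : ∀ i, ContDiff ℝ (⊤:ℕ∞) (Θ i))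

include hL in
lemma contDiff_gdn (r k : Fin n) : ContDiff ℝ (⊤:ℕ∞) (gdn L r k) := contDiff_pdv k (hL r)

include hL hginvSm in
lemma contDiff_Lup (i : Fin n) : ContDiff ℝ (⊤:ℕ∞) (Lup L ginv i) :=
  ContDiff.sum fun j _ => (hL j).mul (hginvSm j i)

include hΓ hΦ in
lemma contDiff_Fvec (i : Fin n) : ContDiff ℝ (⊤:ℕ∞) (Fvec Γ Φ i) := by
  refine (hΦ i).add (ContDiff.sum fun j _ => ContDiff.sum fun k _ => ?_)
  exact ((hΓ i j k).mul (contDiff_coord2 j)).mul (contDiff_coord2 k)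

include hL hΓ hΦ in
lemma contDiff_Fcov (i : Fin n) : ContDiff ℝ (⊤:ℕ∞) (Fcov L Γ Φ i) :=
  ContDiff.sum fun j _ => (contDiff_gdn hL i j).mul (contDiff_Fvec hΓ hΦ j)

include hΓ in
lemma contDiff_vS (m : Fin n) {f : Pt n → ℝ} (hf : ContDiff ℝ (⊤:ℕ∞) f) :
    ContDiff ℝ (⊤:ℕ∞) (vS Γ m f) := by
  refine (contDiff_pdx m hf).sub (ContDiff.sum fun a _ => ContDiff.sum fun b _ => ?_)
  exact ((contDiff_coord2 a).mul (hΓ b a m)).mul (contDiff_pdv b hf)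

include hL hΓ in
lemma contDiff_vCovL (m i : Fin n) : ContDiff ℝ (⊤:ℕ∞) (vCov Γ m L i) := by
  refine (contDiff_vS hΓ m (hL i)).sub (ContDiff.sum fun b _ => (hΓ b m i).mul (hL b))

include hV hΓ in
lemma contDiff_Gp (k i j : Fin n) : ContDiff ℝ (⊤:ℕ∞) (Gp Γ V k i j) :=
  (hΓ k i j).comp (contDiff_pair hV)

include hV in
lemma contDiff_Wp (i : Fin n) : ContDiff ℝ (⊤:ℕ∞) (Wp V i) :=
  ContDiff.sum fun s _ => (contDiff_coord2 s).mul (contDiff_pdv i (hV s))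

include hV hΓ hΘ in
lemma contDiff_Qp (i : Fin n) : ContDiff ℝ (⊤:ℕ∞) (Qp Θ Γ V i) := by
  refine (hΘ i).sub (ContDiff.sum fun j _ => ContDiff.sum fun k _ => ?_)
  exact ((contDiff_Gp hV hΓ k i j).mul (hV j)).mul (contDiff_coord2 k)

end Smooth

section Dict2
variable {L V Φ Θ : Fam n} {ginv : Fin n → Fin n → Pt n → ℝ} {Γ : Conn n}
variable (hL : ∀ i, ContDiff ℝ (⊤:ℕ∞) (L i)) (hV : ∀ i, ContDiff ℝ (⊤:ℕ∞) (V i))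
variable (hLeft : ∀ q : Pt n, lamInv V (lam L q) = q)
variable (hginv : ∀ (q : Pt n) (s k : Fin n), (∑ r, ginv s r q * gdn L r k q) = kron s k)
variable (hΓ : ∀ k i j, ContDiff ℝ (⊤:ℕ∞) (Γ k i j))

lemma lam_snd (q : Pt n) (k : Fin n) : (lam L q).2 k = L k q := rfl

include hLeft in
lemma Gp_lam (q : Pt n) (k i j : Fin n) : Gp Γ V k i j (lam L q) = Γ k i j q := by
  unfold Gp; rw [hLeft q]

include hL hV hLeft hginv hΓ in
lemma pdvGp (q : Pt n) (r k i j : Fin n) :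
    pdv r (Gp Γ V k i j) (lam L q) = ∑ b, pdv b (Γ k i j) q * ginv b r q := by
  have h1 : Gp Γ V k i j = fun p => (Γ k i j) (pair V p) := rfl
  rw [h1, pdv_comp_pair hV (lam L q) (CD.diff (hΓ k i j) _) r]
  have hpq : pair V (lam L q) = q := hLeft q
  rw [hpq]
  refine Finset.sum_congr rfl fun b _ => ?_
  rw [pdvV hL hV hLeft hginv q b r]

include hL hV hLeft hginv in
lemma Wp_lam (q : Pt n) (i : Fin n) : Wp V i (lam L q) = Lup L ginv i q := by
  unfold Wp Lup
  refine Finset.sum_congr rfl fun s _ => ?_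
  rw [lam_snd, pdvV hL hV hLeft hginv q s i]

include hginv in
lemma sum_Lup_g (q : Pt n) (b : Fin n) :
    (∑ j, Lup L ginv j q * gdn L j b q) = L b q := by
  unfold Lup
  calc (∑ j, (∑ m, L m q * ginv m j q) * gdn L j b q)
      = ∑ j, ∑ m, L m q * (ginv m j q * gdn L j b q) := by
        refine Finset.sum_congr rfl fun j _ => ?_; rw [Finset.sum_mul]
        refine Finset.sum_congr rfl fun m _ => ?_; ring
    _ = ∑ m, L m q * ∑ j, ginv m j q * gdn L j b q := by
        rw [Finset.sum_comm]
        refine Finset.sum_congr rfl fun m _ => ?_; rw [Finset.mul_sum]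
    _ = ∑ m, L m q * kron m b := by
        refine Finset.sum_congr rfl fun m _ => ?_; rw [hginv]
    _ = L b q := sum_kron _ b

end Dict2

lemma sum3_rev (f : Fin n → Fin n → Fin n → ℝ) :
    (∑ s, ∑ a, ∑ b, f s a b) = ∑ b, ∑ a, ∑ s, f s a b := by
  calc (∑ s, ∑ a, ∑ b, f s a b) = ∑ a, ∑ s, ∑ b, f s a b := Finset.sum_comm
    _ = ∑ a, ∑ b, ∑ s, f s a b := Finset.sum_congr rfl fun a _ => Finset.sum_comm
    _ = ∑ b, ∑ a, ∑ s, f s a b := Finset.sum_comm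

section Dict3
variable {L V Φ Θ : Fam n} {ginv : Fin n → Fin n → Pt n → ℝ} {Γ : Conn n}
variable (hLeft : ∀ q : Pt n, lamInv V (lam L q) = q)
variable (hΓsym : ∀ (k i j : Fin n) (q : Pt n), Γ k i j q = Γ k j i q)
variable (hΘdef : ∀ (q : Pt n) (i : Fin n),
      Θ i (lam L q) = (∑ s, pdx s (L i) q * q.2 s) + (∑ s, pdv s (L i) q * Φ s q))

include hLeft hΓsym hΘdef in
lemma Qp_lam (q : Pt n) (i : Fin n) :
    Qp Θ Γ V i (lam L q) = (∑ s, q.2 s * vCov Γ s L i q) + Fcov L Γ Φ i q := by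
  have e1 : (∑ s, q.2 s * vCov Γ s L i q)
      = (∑ s, q.2 s * pdx s (L i) q)
        - (∑ s, ∑ a, ∑ b, q.2 s * q.2 a * Γ b a s q * gdn L i b q)
        - (∑ s, ∑ b, q.2 s * Γ b s i q * L b q) := by
    unfold vCov vS
    rw [← Finset.sum_sub_distrib, ← Finset.sum_sub_distrib]
    refine Finset.sum_congr rfl fun s _ => ?_
    rw [mul_sub, mul_sub, Finset.mul_sum, Finset.mul_sum]
    congr 1
    · congr 1
      refine Finset.sum_congr rfl fun a _ => ?_
      rw [Finset.mul_sum]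
      refine Finset.sum_congr rfl fun b _ => ?_
      unfold gdn; ring
    · refine Finset.sum_congr rfl fun b _ => ?_; ring
  have e2 : Fcov L Γ Φ i q
      = (∑ s, pdv s (L i) q * Φ s q)
        + (∑ j, ∑ a, ∑ c, gdn L i j q * Γ j a c q * q.2 a * q.2 c) := by
    unfold Fcov Fvec
    rw [← Finset.sum_add_distrib]
    refine Finset.sum_congr rfl fun j _ => ?_
    rw [mul_add]
    congr 1
    rw [Finset.mul_sum]
    refine Finset.sum_congr rfl fun a _ => ?_
    rw [Finset.mul_sum]
    refine Finset.sum_congr rfl fun c _ => ?_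
    ring
  have e3 : (∑ s, ∑ a, ∑ b, q.2 s * q.2 a * Γ b a s q * gdn L i b q)
      = (∑ j, ∑ a, ∑ c, gdn L i j q * Γ j a c q * q.2 a * q.2 c) := by
    rw [sum3_rev (fun s a b => q.2 s * q.2 a * Γ b a s q * gdn L i b q)]
    refine Finset.sum_congr rfl fun b _ => Finset.sum_congr rfl fun a _ =>
      Finset.sum_congr rfl fun s _ => ?_
    ring
  have e4 : (∑ s, ∑ b, q.2 s * Γ b s i q * L b q)
      = (∑ j, ∑ k, Gp Γ V k i j (lam L q) * V j (lam L q) * (lam L q).2 k) := by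
    refine Finset.sum_congr rfl fun s _ => Finset.sum_congr rfl fun b _ => ?_
    rw [Gp_lam hLeft, V_lam hLeft, lam_snd, hΓsym b i s]
    ring
  unfold Qp
  rw [hΘdef q i, e1, e2, e3, ← e4]
  have : (∑ s, pdx s (L i) q * q.2 s) = ∑ s, q.2 s * pdx s (L i) q :=
    Finset.sum_congr rfl fun s _ => mul_comm _ _
  rw [this]
  ring

end Dict3

section Dict4
variable {L V Φ Θ : Fam n} {ginv : Fin n → Fin n → Pt n → ℝ} {Γ : Conn n}
variable (hL : ∀ i, ContDiff ℝ (⊤:ℕ∞) (L i)) (hV : ∀ i, ContDiff ℝ (⊤:ℕ∞) (V i))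
variable (hLeft : ∀ q : Pt n, lamInv V (lam L q) = q)
variable (hginv : ∀ (q : Pt n) (s k : Fin n), (∑ r, ginv s r q * gdn L r k q) = kron s k)
variable (hΓ : ∀ k i j, ContDiff ℝ (⊤:ℕ∞) (Γ k i j))
variable (hΓsym : ∀ (k i j : Fin n) (q : Pt n), Γ k i j q = Γ k j i q)
variable (hΘdef : ∀ (q : Pt n) (i : Fin n),
      Θ i (lam L q) = (∑ s, pdx s (L i) q * q.2 s) + (∑ s, pdv s (L i) q * Φ s q))

include hL hV hLeft hginv hΓ hΓsym hΘdef in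
lemma Ucheck_lam (q : Pt n) (i : Fin n) :
    Ucheck Θ Γ V i (lam L q) = Uv L ginv Γ Φ i q := by
  have h1 : ∀ s, pVec (Gp Γ V) i V s (lam L q)
      = (-(∑ c, ginv s c q * pdx i (L c) q))
        + (∑ a, ∑ b, L a q * Γ a i b q * ginv s b q)
        + (∑ a, Γ s i a q * q.2 a) := by
    intro s
    unfold pVec pS
    congr 1
    · rw [pdxV hL hV hLeft hginv q s i]
      congr 1
      refine Finset.sum_congr rfl fun a _ => Finset.sum_congr rfl fun b _ => ?_
      rw [lam_snd, Gp_lam hLeft, pdvV hL hV hLeft hginv]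
    · refine Finset.sum_congr rfl fun a _ => ?_
      rw [Gp_lam hLeft, V_lam hLeft]
  set P1 : ℝ := -∑ c, Lup L ginv c q * pdx i (L c) q with hP1
  set P2 : ℝ := ∑ j, ∑ b, Lup L ginv j q * (Γ b i j q * L b q) with hP2
  set P3 : ℝ := ∑ s, ∑ a, Γ s i a q * q.2 a * L s q with hP3
  have hLHS : (∑ s, pVec (Gp Γ V) i V s (lam L q) * (lam L q).2 s) = P1 + P2 + P3 := by
    calc (∑ s, pVec (Gp Γ V) i V s (lam L q) * (lam L q).2 s)
        = (∑ s, (-(∑ c, ginv s c q * pdx i (L c) q)) * L s q)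
          + (∑ s, (∑ a, ∑ b, L a q * Γ a i b q * ginv s b q) * L s q)
          + (∑ s, (∑ a, Γ s i a q * q.2 a) * L s q) := by
          rw [← Finset.sum_add_distrib, ← Finset.sum_add_distrib]
          refine Finset.sum_congr rfl fun s _ => ?_
          rw [h1 s, lam_snd]; ring
      _ = P1 + P2 + P3 := by
          congr 1
          · congr 1
            · -- piece 1
              calc (∑ s, (-(∑ c, ginv s c q * pdx i (L c) q)) * L s q)
                  = ∑ s, ∑ c, -(L s q * ginv s c q * pdx i (L c) q) := by
                    refine Finset.sum_congr rfl fun s _ => ?_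
                    rw [neg_mul, Finset.sum_mul, ← Finset.sum_neg_distrib]
                    exact Finset.sum_congr rfl fun c _ => by ring
                _ = ∑ c, ∑ s, -(L s q * ginv s c q * pdx i (L c) q) := Finset.sum_comm
                _ = P1 := by
                    rw [hP1, ← Finset.sum_neg_distrib]
                    refine Finset.sum_congr rfl fun c _ => ?_
                    rw [Lup, Finset.sum_mul, ← Finset.sum_neg_distrib]
            · -- piece 2
              calc (∑ s, (∑ a, ∑ b, L a q * Γ a i b q * ginv s b q) * L s q)
                  = ∑ s, ∑ a, ∑ b, L a q * Γ a i b q * ginv s b q * L s q := by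
                    refine Finset.sum_congr rfl fun s _ => ?_
                    rw [Finset.sum_mul]
                    exact Finset.sum_congr rfl fun a _ => by rw [Finset.sum_mul]
                _ = ∑ b, ∑ a, ∑ s, L a q * Γ a i b q * ginv s b q * L s q :=
                    sum3_rev _
                _ = P2 := by
                    rw [hP2]
                    refine Finset.sum_congr rfl fun b _ => Finset.sum_congr rfl fun a _ => ?_
                    rw [Lup, Finset.sum_mul]
                    exact Finset.sum_congr rfl fun s _ => by ring
          · -- piece 3
            rw [hP3]
            refine Finset.sum_congr rfl fun s _ => ?_
            rw [Finset.sum_mul]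
  have hRHS : -(∑ j, Lup L ginv j q * vCov Γ i L j q) = P1 + P2 + P3 := by
    have expand : -(∑ j, Lup L ginv j q * vCov Γ i L j q)
        = (∑ j, -(Lup L ginv j q * pdx i (L j) q))
          + (∑ j, ∑ b, Lup L ginv j q * (Γ b i j q * L b q))
          + (∑ j, ∑ a, ∑ b, Lup L ginv j q * (q.2 a * Γ b a i q * gdn L j b q)) := by
      rw [← Finset.sum_neg_distrib, ← Finset.sum_add_distrib, ← Finset.sum_add_distrib]
      refine Finset.sum_congr rfl fun j _ => ?_
      unfold vCov vS
      rw [mul_sub, mul_sub, Finset.mul_sum, Finset.mul_sum]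
      have e1 : (∑ a, Lup L ginv j q * ∑ b, q.2 a * Γ b a i q * pdv b (L j) q)
          = ∑ a, ∑ b, Lup L ginv j q * (q.2 a * Γ b a i q * gdn L j b q) := by
        refine Finset.sum_congr rfl fun a _ => ?_
        rw [Finset.mul_sum]
        exact Finset.sum_congr rfl fun b _ => rfl
      rw [e1]; ring
    rw [expand, hP1, hP2, hP3]
    congr 1
    · congr 1
      rw [← Finset.sum_neg_distrib]
    · -- last piece equals P3
      calc (∑ j, ∑ a, ∑ b, Lup L ginv j q * (q.2 a * Γ b a i q * gdn L j b q))
          = ∑ b, ∑ a, ∑ j, Lup L ginv j q * (q.2 a * Γ b a i q * gdn L j b q) :=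
            sum3_rev _
        _ = ∑ b, ∑ a, (∑ j, Lup L ginv j q * gdn L j b q) * (q.2 a * Γ b a i q) := by
            refine Finset.sum_congr rfl fun b _ => Finset.sum_congr rfl fun a _ => ?_
            rw [Finset.sum_mul]
            exact Finset.sum_congr rfl fun j _ => by ring
        _ = ∑ b, ∑ a, L b q * (q.2 a * Γ b a i q) := by
            refine Finset.sum_congr rfl fun b _ => Finset.sum_congr rfl fun a _ => ?_
            rw [sum_Lup_g hginv]
        _ = ∑ s, ∑ a, Γ s i a q * q.2 a * L s q := by
            refine Finset.sum_congr rfl fun b _ => Finset.sum_congr rfl fun a _ => ?_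
            rw [hΓsym b a i]; ring
  unfold Ucheck
  rw [Qp_lam hLeft hΓsym hΘdef q i, hLHS, ← hRHS]
  unfold Uv
  ring

end Dict4

lemma sum_kron_left (A : Fin n → ℝ) (b : Fin n) : (∑ m, kron m b * A m) = A b := by
  simp [kron, ite_mul, Finset.sum_ite_eq]

lemma single_eq_kron (j s : Fin n) : (Pi.single j 1 : Fin n → ℝ) s = kron s j := by
  simp [Pi.single_apply, kron]

lemma sum3_rot (f : Fin n → Fin n → Fin n → ℝ) :
    (∑ a, ∑ b, ∑ c, f a b c) = ∑ c, ∑ a, ∑ b, f a b c := by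
  calc (∑ a, ∑ b, ∑ c, f a b c) = ∑ a, ∑ c, ∑ b, f a b c :=
        Finset.sum_congr rfl fun a _ => Finset.sum_comm
    _ = ∑ c, ∑ a, ∑ b, f a b c := Finset.sum_comm

lemma sum22 (f : Fin n → Fin n → Fin n → Fin n → ℝ) :
    (∑ r, ∑ s, ∑ j, ∑ b, f r s j b) = ∑ j, ∑ b, ∑ r, ∑ s, f r s j b := by
  calc (∑ r, ∑ s, ∑ j, ∑ b, f r s j b)
      = ∑ r, ∑ j, ∑ s, ∑ b, f r s j b := Finset.sum_congr rfl fun r _ => Finset.sum_comm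
    _ = ∑ j, ∑ r, ∑ s, ∑ b, f r s j b := Finset.sum_comm
    _ = ∑ j, ∑ b, ∑ r, ∑ s, f r s j b := Finset.sum_congr rfl fun j _ => sum3_rot _

section Dict5
variable {L V Φ Θ : Fam n} {ginv : Fin n → Fin n → Pt n → ℝ} {Γ : Conn n}
variable (hL : ∀ i, ContDiff ℝ (⊤:ℕ∞) (L i)) (hV : ∀ i, ContDiff ℝ (⊤:ℕ∞) (V i))
variable (hginvSm : ∀ i j, ContDiff ℝ (⊤:ℕ∞) (ginv i j))
variable (hLeft : ∀ q : Pt n, lamInv V (lam L q) = q)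
variable (hginv : ∀ (q : Pt n) (s k : Fin n), (∑ r, ginv s r q * gdn L r k q) = kron s k)
variable (hΓ : ∀ k i j, ContDiff ℝ (⊤:ℕ∞) (Γ k i j))
variable (hΓsym : ∀ (k i j : Fin n) (q : Pt n), Γ k i j q = Γ k j i q)
variable (hΦ : ∀ i, ContDiff ℝ (⊤:ℕ∞) (Φ i)) (hΘ : ∀ i, ContDiff ℝ (⊤:ℕ∞) (Θ i))
variable (hΘdef : ∀ (q : Pt n) (i : Fin n),
      Θ i (lam L q) = (∑ s, pdx s (L i) q * q.2 s) + (∑ s, pdv s (L i) q * Φ s q))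

include hginv in
lemma contract_gi (Y : Fin n → ℝ) (q : Pt n) (b : Fin n) :
    (∑ c, (∑ m, Y m * ginv m c q) * gdn L c b q) = Y b := by
  calc (∑ c, (∑ m, Y m * ginv m c q) * gdn L c b q)
      = ∑ c, ∑ m, Y m * (ginv m c q * gdn L c b q) := by
        refine Finset.sum_congr rfl fun c _ => ?_
        rw [Finset.sum_mul]
        exact Finset.sum_congr rfl fun m _ => by ring
    _ = ∑ m, ∑ c, Y m * (ginv m c q * gdn L c b q) := Finset.sum_comm
    _ = ∑ m, Y m * kron m b := by
        refine Finset.sum_congr rfl fun m _ => ?_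
        rw [← Finset.mul_sum, hginv q m b]
    _ = Y b := sum_kron _ _

include hginv in
lemma contract_ginv_Fcov (q : Pt n) (m : Fin n) :
    (∑ r, ginv m r q * Fcov L Γ Φ r q) = Fvec Γ Φ m q := by
  unfold Fcov
  calc (∑ r, ginv m r q * ∑ j, gdn L r j q * Fvec Γ Φ j q)
      = ∑ r, ∑ j, ginv m r q * gdn L r j q * Fvec Γ Φ j q := by
        refine Finset.sum_congr rfl fun r _ => ?_
        rw [Finset.mul_sum]
        exact Finset.sum_congr rfl fun j _ => by ring
    _ = ∑ j, ∑ r, ginv m r q * gdn L r j q * Fvec Γ Φ j q := Finset.sum_comm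
    _ = ∑ j, kron m j * Fvec Γ Φ j q := by
        refine Finset.sum_congr rfl fun j _ => ?_
        rw [← Finset.sum_mul, hginv q m j]
    _ = Fvec Γ Φ m q := sum_kron' _ _

-- derivatives of Wp at lam
include hL hV hLeft hginv in
lemma pdv_Wp_lam (q : Pt n) (k c : Fin n) :
    pdv c (Wp V k) (lam L q) = ∑ m, pdv m (Lup L ginv k) q * ginv m c q :=
  pdv_at_lam hL hginv q (CD.diff (contDiff_Wp hV k) _)
    (fun p => Wp_lam hL hV hLeft hginv p k) c

include hL hV hLeft hginv in
lemma pdx_Wp_lam (q : Pt n) (k m : Fin n) :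
    pdx m (Wp V k) (lam L q)
      = pdx m (Lup L ginv k) q
        - ∑ b, pdx m (L b) q * ∑ j, pdv j (Lup L ginv k) q * ginv j b q :=
  pdx_at_lam hL hginv q (CD.diff (contDiff_Wp hV k) _)
    (fun p => Wp_lam hL hV hLeft hginv p k) m

-- derivative of the v-representation pullback of Qp
include hL hΓ hΦ in
lemma pdv_qfun (q : Pt n) (j r : Fin n) :
    pdv j (fun p => (∑ s, p.2 s * vCov Γ s L r p) + Fcov L Γ Φ r p) q
      = vCov Γ j L r q + (∑ s, q.2 s * pdv j (vCov Γ s L r) q)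
        + pdv j (Fcov L Γ Φ r) q := by
  have hterm : ∀ s : Fin n, DifferentiableAt ℝ (fun p : Pt n => p.2 s * vCov Γ s L r p) q :=
    fun s => ((CD.diff (contDiff_coord2 s) q).mul (CD.diff (contDiff_vCovL hL hΓ s r) q))
  have hsum : DifferentiableAt ℝ (fun p : Pt n => ∑ s, p.2 s * vCov Γ s L r p) q := by
    apply DifferentiableAt.fun_sum; intro s _; exact hterm s
  unfold pdv
  rw [fd_add hsum (CD.diff (contDiff_Fcov hL hΓ hΦ r) q)]
  congr 1
  rw [fd_sum Finset.univ _ (fun s _ => hterm s)]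
  calc (∑ s, fderiv ℝ (fun p : Pt n => p.2 s * vCov Γ s L r p) q (0, Pi.single j 1))
      = ∑ s, (kron s j * vCov Γ s L r q + q.2 s * pdv j (vCov Γ s L r) q) := by
        refine Finset.sum_congr rfl fun s _ => ?_
        rw [fd_mul (CD.diff (contDiff_coord2 s) q) (CD.diff (contDiff_vCovL hL hΓ s r) q),
          fd_coord2]
        have h2 : (((0:Fin n → ℝ), Pi.single j 1) : Pt n).2 s = kron s j := single_eq_kron j s
        rw [h2]
        rfl
    _ = (∑ s, kron s j * vCov Γ s L r q) + ∑ s, q.2 s * pdv j (vCov Γ s L r) q :=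
        Finset.sum_add_distrib
    _ = vCov Γ j L r q + ∑ s, q.2 s * pdv j (vCov Γ s L r) q := by
        congr 1
        exact sum_kron_left _ _

include hL hV hLeft hginv hΓ hΓsym hΦ hΘ hΘdef in
lemma pdv_Qp_lam (q : Pt n) (r c : Fin n) :
    pdv c (Qp Θ Γ V r) (lam L q)
      = ∑ j, (vCov Γ j L r q + (∑ s, q.2 s * pdv j (vCov Γ s L r) q)
          + pdv j (Fcov L Γ Φ r) q) * ginv j c q := by
  have h := pdv_at_lam (h := fun p => (∑ s, p.2 s * vCov Γ s L r p) + Fcov L Γ Φ r p)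
    hL hginv q (CD.diff (contDiff_Qp hV hΓ hΘ r) _)
    (fun p => Qp_lam hLeft hΓsym hΘdef p r) c
  rw [h]
  refine Finset.sum_congr rfl fun j _ => ?_
  rw [pdv_qfun hL hΓ hΦ q j r]

end Dict5

lemma gdn_eq (L : Fam n) (r k : Fin n) (q : Pt n) : gdn L r k q = pdv k (L r) q := rfl

section Dict6
variable {L V Φ Θ : Fam n} {ginv : Fin n → Fin n → Pt n → ℝ} {Γ : Conn n}
variable (hL : ∀ i, ContDiff ℝ (⊤:ℕ∞) (L i)) (hV : ∀ i, ContDiff ℝ (⊤:ℕ∞) (V i))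
variable (hLeft : ∀ q : Pt n, lamInv V (lam L q) = q)
variable (hginv : ∀ (q : Pt n) (s k : Fin n), (∑ r, ginv s r q * gdn L r k q) = kron s k)

include hL hV hLeft hginv in
lemma pVecWp_lam (q : Pt n) (r k : Fin n) :
    pVec (Gp Γ V) r (Wp V) k (lam L q)
      = vVec Γ r (Lup L ginv) k q
        - ∑ c, (∑ m, pdv m (Lup L ginv k) q * ginv m c q) * vCov Γ r L c q := by
  have hLHS : pVec (Gp Γ V) r (Wp V) k (lam L q)
      = pdx r (Lup L ginv k) q
        - (∑ b, pdx r (L b) q * ∑ j, pdv j (Lup L ginv k) q * ginv j b q)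
        + (∑ a, ∑ b, L a q * Γ a r b q * ∑ m, pdv m (Lup L ginv k) q * ginv m b q)
        + (∑ a, Γ k r a q * Lup L ginv a q) := by
    unfold pVec pS
    rw [pdx_Wp_lam hL hV hLeft hginv q k r]
    have e2 : (∑ a, ∑ b, (lam L q).2 a * Gp Γ V a r b (lam L q) * pdv b (Wp V k) (lam L q))
        = ∑ a, ∑ b, L a q * Γ a r b q * ∑ m, pdv m (Lup L ginv k) q * ginv m b q := by
      refine Finset.sum_congr rfl fun a _ => Finset.sum_congr rfl fun b _ => ?_
      rw [lam_snd, Gp_lam hLeft, pdv_Wp_lam hL hV hLeft hginv]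
    have e3 : (∑ a, Gp Γ V k r a (lam L q) * Wp V a (lam L q))
        = ∑ a, Γ k r a q * Lup L ginv a q := by
      refine Finset.sum_congr rfl fun a _ => ?_
      rw [Gp_lam hLeft, Wp_lam hL hV hLeft hginv]
    rw [e2, e3]
  -- expansion of the correction term
  have hC : (∑ c, (∑ m, pdv m (Lup L ginv k) q * ginv m c q) * vCov Γ r L c q)
      = (∑ b, pdx r (L b) q * ∑ j, pdv j (Lup L ginv k) q * ginv j b q)
        - (∑ a, ∑ b, q.2 a * Γ b a r q * pdv b (Lup L ginv k) q)
        - (∑ a, ∑ b, L a q * Γ a r b q * ∑ m, pdv m (Lup L ginv k) q * ginv m b q) := by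
    have expand : (∑ c, (∑ m, pdv m (Lup L ginv k) q * ginv m c q) * vCov Γ r L c q)
        = (∑ c, (∑ m, pdv m (Lup L ginv k) q * ginv m c q) * pdx r (L c) q)
          - (∑ c, ∑ a, ∑ b, (∑ m, pdv m (Lup L ginv k) q * ginv m c q)
              * (q.2 a * Γ b a r q * gdn L c b q))
          - (∑ c, ∑ b, (∑ m, pdv m (Lup L ginv k) q * ginv m c q) * (Γ b r c q * L b q)) := by
      rw [← Finset.sum_sub_distrib, ← Finset.sum_sub_distrib]
      refine Finset.sum_congr rfl fun c _ => ?_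
      unfold vCov vS
      simp only [← gdn_eq]
      rw [mul_sub, mul_sub]
      congr 1
      · congr 1
        rw [Finset.mul_sum]
        refine Finset.sum_congr rfl fun a _ => ?_
        rw [Finset.mul_sum]
      · rw [Finset.mul_sum]
    rw [expand]
    congr 1
    · congr 1
      · exact Finset.sum_congr rfl fun c _ => mul_comm _ _
      · -- middle: contraction via contract_gi
        calc (∑ c, ∑ a, ∑ b, (∑ m, pdv m (Lup L ginv k) q * ginv m c q)
              * (q.2 a * Γ b a r q * gdn L c b q))
            = ∑ a, ∑ b, ∑ c, (∑ m, pdv m (Lup L ginv k) q * ginv m c q)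
              * (q.2 a * Γ b a r q * gdn L c b q) := (sum3_rot _).symm
          _ = ∑ a, ∑ b, (q.2 a * Γ b a r q)
              * ∑ c, (∑ m, pdv m (Lup L ginv k) q * ginv m c q) * gdn L c b q := by
              refine Finset.sum_congr rfl fun a _ => Finset.sum_congr rfl fun b _ => ?_
              rw [Finset.mul_sum]
              exact Finset.sum_congr rfl fun c _ => by ring
          _ = ∑ a, ∑ b, q.2 a * Γ b a r q * pdv b (Lup L ginv k) q := by
              refine Finset.sum_congr rfl fun a _ => Finset.sum_congr rfl fun b _ => ?_
              rw [contract_gi hginv (fun m => pdv m (Lup L ginv k) q) q b]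
    · -- third piece
      calc (∑ c, ∑ b, (∑ m, pdv m (Lup L ginv k) q * ginv m c q) * (Γ b r c q * L b q))
          = ∑ b, ∑ c, (∑ m, pdv m (Lup L ginv k) q * ginv m c q) * (Γ b r c q * L b q) :=
            Finset.sum_comm
        _ = ∑ a, ∑ b, L a q * Γ a r b q * ∑ m, pdv m (Lup L ginv k) q * ginv m b q := by
            refine Finset.sum_congr rfl fun a _ => Finset.sum_congr rfl fun b _ => ?_
            ring
  rw [hLHS, hC]
  unfold vVec vS
  ring

end Dict6

section Tlemmas
variable {L V Φ Θ : Fam n} {ginv : Fin n → Fin n → Pt n → ℝ} {Γ : Conn n}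
variable (hL : ∀ i, ContDiff ℝ (⊤:ℕ∞) (L i)) (hV : ∀ i, ContDiff ℝ (⊤:ℕ∞) (V i))
variable (hLeft : ∀ q : Pt n, lamInv V (lam L q) = q)
variable (hginv : ∀ (q : Pt n) (s k : Fin n), (∑ r, ginv s r q * gdn L r k q) = kron s k)
variable (hΓ : ∀ k i j, ContDiff ℝ (⊤:ℕ∞) (Γ k i j))
variable (hΓsym : ∀ (k i j : Fin n) (q : Pt n), Γ k i j q = Γ k j i q)
variable (hΦ : ∀ i, ContDiff ℝ (⊤:ℕ∞) (Φ i)) (hΘ : ∀ i, ContDiff ℝ (⊤:ℕ∞) (Θ i))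
variable (hΘdef : ∀ (q : Pt n) (i : Fin n),
      Θ i (lam L q) = (∑ s, pdx s (L i) q * q.2 s) + (∑ s, pdv s (L i) q * Φ s q))

include hL hV hLeft hginv hΓ hΓsym hΘdef in
lemma T1eq (q : Pt n) (k : Fin n) :
    (∑ r, pdv k (V r) (lam L q) * Ucheck Θ Γ V r (lam L q))
      = ∑ r, ginv r k q * Uv L ginv Γ Φ r q := by
  refine Finset.sum_congr rfl fun r _ => ?_
  rw [pdvV hL hV hLeft hginv, Ucheck_lam hL hV hLeft hginv hΓ hΓsym hΘdef]

include hL hV hLeft hginv in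
lemma T2eq (q : Pt n) (k : Fin n) :
    (∑ r, pVec (Gp Γ V) r (Wp V) k (lam L q) * V r (lam L q))
      = (∑ r, q.2 r * vVec Γ r (Lup L ginv) k q)
        - (∑ s, ∑ m, ∑ r, q.2 s * pdv m (Lup L ginv k) q * ginv m r q * vCov Γ s L r q) := by
  calc (∑ r, pVec (Gp Γ V) r (Wp V) k (lam L q) * V r (lam L q))
      = ∑ r, (vVec Γ r (Lup L ginv) k q
          - ∑ c, (∑ m, pdv m (Lup L ginv k) q * ginv m c q) * vCov Γ r L c q) * q.2 r := by
        refine Finset.sum_congr rfl fun r _ => ?_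
        rw [pVecWp_lam hL hV hLeft hginv, V_lam hLeft]
    _ = (∑ r, q.2 r * vVec Γ r (Lup L ginv) k q)
        - (∑ r, ∑ c, ∑ m, q.2 r * pdv m (Lup L ginv k) q * ginv m c q * vCov Γ r L c q) := by
        rw [← Finset.sum_sub_distrib]
        refine Finset.sum_congr rfl fun r _ => ?_
        rw [sub_mul]
        congr 1
        · ring
        · rw [Finset.sum_mul]
          refine Finset.sum_congr rfl fun c _ => ?_
          rw [Finset.sum_mul, Finset.sum_mul]
          refine Finset.sum_congr rfl fun m _ => ?_
          ring
    _ = (∑ r, q.2 r * vVec Γ r (Lup L ginv) k q)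
        - (∑ s, ∑ m, ∑ r, q.2 s * pdv m (Lup L ginv k) q * ginv m r q * vCov Γ s L r q) := by
        congr 1
        refine Finset.sum_congr rfl fun r _ => Finset.sum_comm

include hL hV hLeft hginv hΓ hΓsym hΦ hΘdef in
lemma T3eq (q : Pt n) (k : Fin n) :
    (∑ r, pdv r (Wp V k) (lam L q) * Qp Θ Γ V r (lam L q))
      = (∑ j, Fvec Γ Φ j q * pdv j (Lup L ginv k) q)
        + (∑ s, ∑ m, ∑ r, q.2 s * pdv m (Lup L ginv k) q * ginv m r q * vCov Γ s L r q) := by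
  calc (∑ r, pdv r (Wp V k) (lam L q) * Qp Θ Γ V r (lam L q))
      = ∑ r, (∑ m, pdv m (Lup L ginv k) q * ginv m r q)
          * ((∑ s, q.2 s * vCov Γ s L r q) + Fcov L Γ Φ r q) := by
        refine Finset.sum_congr rfl fun r _ => ?_
        rw [pdv_Wp_lam hL hV hLeft hginv, Qp_lam hLeft hΓsym hΘdef]
    _ = (∑ r, ∑ m, pdv m (Lup L ginv k) q * ginv m r q * Fcov L Γ Φ r q)
        + (∑ r, ∑ m, ∑ s, pdv m (Lup L ginv k) q * ginv m r q * q.2 s * vCov Γ s L r q) := by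
        rw [← Finset.sum_add_distrib]
        refine Finset.sum_congr rfl fun r _ => ?_
        rw [mul_add]
        rw [add_comm]
        congr 1
        · rw [Finset.sum_mul]
        · rw [Finset.sum_mul]
          refine Finset.sum_congr rfl fun m _ => ?_
          rw [Finset.mul_sum]
          refine Finset.sum_congr rfl fun s _ => ?_
          ring
    _ = (∑ j, Fvec Γ Φ j q * pdv j (Lup L ginv k) q)
        + (∑ s, ∑ m, ∑ r, q.2 s * pdv m (Lup L ginv k) q * ginv m r q * vCov Γ s L r q) := by
        congr 1
        · calc (∑ r, ∑ m, pdv m (Lup L ginv k) q * ginv m r q * Fcov L Γ Φ r q)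
              = ∑ m, ∑ r, pdv m (Lup L ginv k) q * ginv m r q * Fcov L Γ Φ r q :=
                Finset.sum_comm
            _ = ∑ m, pdv m (Lup L ginv k) q * ∑ r, ginv m r q * Fcov L Γ Φ r q := by
                refine Finset.sum_congr rfl fun m _ => ?_
                rw [Finset.mul_sum]
                refine Finset.sum_congr rfl fun r _ => ?_
                ring
            _ = ∑ j, Fvec Γ Φ j q * pdv j (Lup L ginv k) q := by
                refine Finset.sum_congr rfl fun m _ => ?_
                rw [contract_ginv_Fcov hginv]
                ring
        · rw [sum3_rev (fun r m s => pdv m (Lup L ginv k) q * ginv m r q * q.2 s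
              * vCov Γ s L r q)]
          refine Finset.sum_congr rfl fun s _ => Finset.sum_congr rfl fun m _ =>
            Finset.sum_congr rfl fun r _ => ?_
          ring

include hL hV hLeft hginv hΓ hΓsym hΦ hΘ hΘdef in
lemma T4eq (q : Pt n) (k : Fin n) :
    (∑ r, Wp V r (lam L q) * pdv k (Qp Θ Γ V r) (lam L q))
      = (∑ j, ∑ r, Lup L ginv r q * ginv j k q * vCov Γ j L r q)
        + (∑ j, ∑ r, ∑ s, Lup L ginv r q * ginv j k q * q.2 s * pdv j (vCov Γ s L r) q)
        + (∑ j, ∑ r, Lup L ginv r q * ginv j k q * pdv j (Fcov L Γ Φ r) q) := by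
  calc (∑ r, Wp V r (lam L q) * pdv k (Qp Θ Γ V r) (lam L q))
      = ∑ r, ∑ j, Lup L ginv r q
          * ((vCov Γ j L r q + (∑ s, q.2 s * pdv j (vCov Γ s L r) q)
              + pdv j (Fcov L Γ Φ r) q) * ginv j k q) := by
        refine Finset.sum_congr rfl fun r _ => ?_
        rw [Wp_lam hL hV hLeft hginv,
          pdv_Qp_lam hL hV hLeft hginv hΓ hΓsym hΦ hΘ hΘdef, Finset.mul_sum]
    _ = ∑ j, ∑ r, Lup L ginv r q
          * ((vCov Γ j L r q + (∑ s, q.2 s * pdv j (vCov Γ s L r) q)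
              + pdv j (Fcov L Γ Φ r) q) * ginv j k q) := Finset.sum_comm
    _ = ∑ j, ∑ r, (Lup L ginv r q * ginv j k q * vCov Γ j L r q
          + (∑ s, Lup L ginv r q * ginv j k q * q.2 s * pdv j (vCov Γ s L r) q)
          + Lup L ginv r q * ginv j k q * pdv j (Fcov L Γ Φ r) q) := by
        refine Finset.sum_congr rfl fun j _ => Finset.sum_congr rfl fun r _ => ?_
        rw [add_mul, add_mul, mul_add, mul_add]
        congr 1
        · congr 1
          · ring
          · rw [Finset.sum_mul, Finset.mul_sum]
            refine Finset.sum_congr rfl fun s _ => ?_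
            ring
        · ring
    _ = _ := by
        rw [← Finset.sum_add_distrib, ← Finset.sum_add_distrib]
        refine Finset.sum_congr rfl fun j _ => ?_
        rw [← Finset.sum_add_distrib, ← Finset.sum_add_distrib]

include hL hV hLeft hginv hΓ hΓsym in
lemma T5eq (q : Pt n) (k : Fin n) :
    (∑ r, ∑ s, ∑ j, (lam L q).2 s * Dp (Gp Γ V) s k r j (lam L q)
        * Wp V r (lam L q) * V j (lam L q))
      = ∑ j, ∑ m, ∑ r, ∑ s, ginv m k q * L s q * Dv Γ s r j m q
          * Lup L ginv r q * q.2 j := by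
  calc (∑ r, ∑ s, ∑ j, (lam L q).2 s * Dp (Gp Γ V) s k r j (lam L q)
        * Wp V r (lam L q) * V j (lam L q))
      = ∑ r, ∑ s, ∑ j, ∑ b, ginv b k q * L s q * (-(pdv b (Γ s j r) q))
          * Lup L ginv r q * q.2 j := by
        refine Finset.sum_congr rfl fun r _ => Finset.sum_congr rfl fun s _ =>
          Finset.sum_congr rfl fun j _ => ?_
        have hDp : Dp (Gp Γ V) s k r j (lam L q)
            = -∑ b, pdv b (Γ s r j) q * ginv b k q := by
          unfold Dp
          rw [pdvGp hL hV hLeft hginv hΓ]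
        have hsym : Γ s r j = Γ s j r := funext fun p => hΓsym s r j p
        rw [hDp, lam_snd, Wp_lam hL hV hLeft hginv, V_lam hLeft, hsym, mul_neg,
          Finset.mul_sum, neg_mul, neg_mul, Finset.sum_mul, Finset.sum_mul,
          ← Finset.sum_neg_distrib]
        refine Finset.sum_congr rfl fun b _ => ?_
        ring
    _ = ∑ j, ∑ b, ∑ r, ∑ s, ginv b k q * L s q * (-(pdv b (Γ s j r) q))
          * Lup L ginv r q * q.2 j := sum22 _
    _ = _ := by
        refine Finset.sum_congr rfl fun j _ => Finset.sum_congr rfl fun m _ =>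
          Finset.sum_congr rfl fun r _ => Finset.sum_congr rfl fun s _ => ?_
        rfl

end Tlemmas

end Aux

theorem stmt6
    (n : ℕ) (hn : 2 ≤ n)
    (L V : Fam n) (ginv : Fin n → Fin n → Pt n → ℝ)
    (hL : ∀ i, ContDiff ℝ (⊤ : ℕ∞) (L i))
    (hV : ∀ i, ContDiff ℝ (⊤ : ℕ∞) (V i))
    (hginvSm : ∀ i j, ContDiff ℝ (⊤ : ℕ∞) (ginv i j))
    (hLeft : ∀ q : Pt n, lamInv V (lam L q) = q)
    (hRight : ∀ q : Pt n, lam L (lamInv V q) = q)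
    (hginv : ∀ (q : Pt n) (s k : Fin n), (∑ r, ginv s r q * gdn L r k q) = kron s k)
    (Γ : Conn n)
    (hΓ : ∀ k i j, ContDiff ℝ (⊤ : ℕ∞) (Γ k i j))
    (hΓsym : ∀ (k i j : Fin n) (q : Pt n), Γ k i j q = Γ k j i q)
    (Φ : Fam n) (hΦ : ∀ i, ContDiff ℝ (⊤ : ℕ∞) (Φ i))
    (Θ : Fam n) (hΘ : ∀ i, ContDiff ℝ (⊤ : ℕ∞) (Θ i))
    (hΘdef : ∀ (q : Pt n) (i : Fin n),
      Θ i (lam L q) = (∑ s, pdx s (L i) q * q.2 s) + (∑ s, pdv s (L i) q * Φ s q)) :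
    ∀ (q : Pt n) (k : Fin n),
      alphaCheck Θ Γ V k (lam L q) = alphaV L ginv Γ Φ k q := by
  intro q k
  unfold alphaCheck alphaV
  rw [T1eq hL hV hLeft hginv hΓ hΓsym hΘdef q k,
    T2eq hL hV hLeft hginv q k,
    T3eq hL hV hLeft hginv hΓ hΓsym hΦ hΘdef q k,
    T4eq hL hV hLeft hginv hΓ hΓsym hΦ hΘ hΘdef q k,
    T5eq hL hV hLeft hginv hΓ hΓsym q k]
  ring
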